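/- Let r₁,…,r_T be independent Gaussian random variables with r_t ~ N(0, m_t²), m_t > 0, and let v₁,…,v_T be fixed reals. Define σ² = Σ_t (v_t/m_t)² and s = ε − (1/2)Σ_t (v_t/m_t)² with s > 0. Then P(|Σ_t (2 r_t v_t + v_t²)/(2 m_t²)| > ε) ≤ (2σ/(s√(2π))) · exp(−s²/(2σ²)). -/

import Mathlib

open MeasureTheory ProbabilityTheory

open Real Filter Set
open scoped NNReal ENNReal

lemma pdf_mul_eq (v₁ v₂ : ℝ≥0) (h₁ : v₁ ≠ 0) (h₂ : v₂ ≠ 0) (x z : ℝ) :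
    gaussianPDFReal 0 v₁ x * gaussianPDFReal x v₂ z =
      ((Real.sqrt (2 * π * v₁))⁻¹ * (Real.sqrt (2 * π * v₂))⁻¹ *
        Real.exp (-z^2 / (2 * ((v₁:ℝ) + v₂)))) *
      Real.exp (-(((v₁:ℝ) + v₂) / (2 * v₁ * v₂)) * (x - (v₁:ℝ) * z / ((v₁:ℝ) + v₂))^2) := by
  have hv1 : (0:ℝ) < v₁ := lt_of_le_of_ne v₁.coe_nonneg (by exact_mod_cast h₁.symm)
  have hv2 : (0:ℝ) < v₂ := lt_of_le_of_ne v₂.coe_nonneg (by exact_mod_cast h₂.symm)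
  have hv12 : (0:ℝ) < (v₁:ℝ) + v₂ := by linarith
  have key : (-(x - 0) ^ 2 / (2 * (v₁:ℝ)) + -(z - x) ^ 2 / (2 * (v₂:ℝ)))
      = -z ^ 2 / (2 * ((v₁:ℝ) + v₂)) +
        -(((v₁:ℝ) + v₂) / (2 * v₁ * v₂)) * (x - (v₁:ℝ) * z / ((v₁:ℝ) + v₂)) ^ 2 := by
    field_simp
    ring
  simp only [gaussianPDFReal_def]
  rw [mul_mul_mul_comm, ← Real.exp_add, key, Real.exp_add]
  ring

lemma pdf_conv (v₁ v₂ : ℝ≥0) (h₁ : v₁ ≠ 0) (h₂ : v₂ ≠ 0) (z : ℝ) :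
    ∫ x, gaussianPDFReal 0 v₁ x * gaussianPDFReal x v₂ z = gaussianPDFReal 0 (v₁ + v₂) z := by
  have hv1 : (0:ℝ) < v₁ := lt_of_le_of_ne v₁.coe_nonneg (by exact_mod_cast h₁.symm)
  have hv2 : (0:ℝ) < v₂ := lt_of_le_of_ne v₂.coe_nonneg (by exact_mod_cast h₂.symm)
  have hv12 : (0:ℝ) < (v₁:ℝ) + v₂ := by linarith
  have ha : (0:ℝ) < ((v₁:ℝ) + v₂) / (2 * v₁ * v₂) := by positivity
  simp only [pdf_mul_eq v₁ v₂ h₁ h₂ _ z]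
  rw [MeasureTheory.integral_const_mul]
  have hint : (∫ x : ℝ, Real.exp (-(((v₁:ℝ) + v₂) / (2 * v₁ * v₂)) *
        (x - (v₁:ℝ) * z / ((v₁:ℝ) + v₂)) ^ 2))
      = ∫ x : ℝ, Real.exp (-(((v₁:ℝ) + v₂) / (2 * v₁ * v₂)) * x ^ 2) :=
    integral_sub_right_eq_self (fun y => Real.exp (-(((v₁:ℝ) + v₂) / (2 * v₁ * v₂)) * y ^ 2)) _
  rw [hint, integral_gaussian]
  rw [gaussianPDFReal_def]
  have hcast : ((v₁ + v₂ : ℝ≥0) : ℝ) = (v₁:ℝ) + v₂ := by push_cast; ring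
  rw [hcast]
  simp only [sub_zero]
  rw [mul_comm, ← mul_assoc]
  congr 1
  rw [← Real.sqrt_inv, ← Real.sqrt_inv, ← Real.sqrt_inv (2 * π * ((v₁:ℝ)+v₂)),
    ← Real.sqrt_mul (by positivity), ← Real.sqrt_mul (by positivity)]
  congr 1
  field_simp

lemma integrable_pdf_conv (v₁ v₂ : ℝ≥0) (h₁ : v₁ ≠ 0) (h₂ : v₂ ≠ 0) (z : ℝ) :
    Integrable (fun x => gaussianPDFReal 0 v₁ x * gaussianPDFReal x v₂ z) := by
  have hv1 : (0:ℝ) < v₁ := lt_of_le_of_ne v₁.coe_nonneg (by exact_mod_cast h₁.symm)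
  have hv2 : (0:ℝ) < v₂ := lt_of_le_of_ne v₂.coe_nonneg (by exact_mod_cast h₂.symm)
  have ha : (0:ℝ) < ((v₁:ℝ) + v₂) / (2 * v₁ * v₂) := by positivity
  simp only [pdf_mul_eq v₁ v₂ h₁ h₂ _ z]
  exact ((integrable_exp_neg_mul_sq ha).comp_sub_right
    ((v₁:ℝ) * z / ((v₁:ℝ) + v₂))).const_mul _

lemma joint_meas (v : ℝ≥0) : Measurable (fun p : ℝ × ℝ => gaussianPDF p.1 v p.2) := by
  apply Measurable.ennreal_ofReal
  simp only [gaussianPDFReal_def]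
  exact measurable_const.mul
    ((((measurable_snd.sub measurable_fst).pow_const 2).neg.div_const _).exp)

lemma gaussian_conv (v₁ v₂ : ℝ≥0) :
    ((gaussianReal 0 v₁).prod (gaussianReal 0 v₂)).map (fun p : ℝ × ℝ => p.1 + p.2)
      = gaussianReal 0 (v₁ + v₂) := by
  by_cases h₁ : v₁ = 0
  · subst h₁
    rw [zero_add, gaussianReal_zero_var, Measure.dirac_prod,
      Measure.map_map measurable_add measurable_prodMk_left]
    have : ((fun p : ℝ × ℝ => p.1 + p.2) ∘ Prod.mk (0:ℝ)) = id := by funext y; simp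
    rw [this, Measure.map_id]
  by_cases h₂ : v₂ = 0
  · subst h₂
    rw [add_zero, gaussianReal_zero_var, Measure.prod_dirac,
      Measure.map_map measurable_add measurable_prodMk_right]
    have : ((fun p : ℝ × ℝ => p.1 + p.2) ∘ (fun x : ℝ => (x, (0:ℝ)))) = id := by
      funext y; simp
    rw [this, Measure.map_id]
  have h₁₂ : v₁ + v₂ ≠ 0 := by simp [h₁]
  ext s hs
  rw [Measure.map_apply measurable_add hs, Measure.prod_apply (measurable_add hs)]
  have hstep : ∀ x : ℝ, gaussianReal 0 v₂ (Prod.mk x ⁻¹' ((fun p : ℝ × ℝ => p.1 + p.2) ⁻¹' s))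
      = ∫⁻ z in s, gaussianPDF x v₂ z := by
    intro x
    have : Prod.mk x ⁻¹' ((fun p : ℝ × ℝ => p.1 + p.2) ⁻¹' s) = (x + ·) ⁻¹' s := rfl
    rw [this, ← Measure.map_apply (measurable_const_add x) hs,
      gaussianReal_map_const_add, zero_add, gaussianReal_apply _ h₂]
  simp_rw [hstep]
  rw [gaussianReal_of_var_ne_zero _ h₁,
    lintegral_withDensity_eq_lintegral_mul _ (measurable_gaussianPDF _ _)
      (Measurable.lintegral_prod_right (f := fun x z => gaussianPDF x v₂ z) (joint_meas v₂))]
  simp only [Pi.mul_apply]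
  have hmf : Measurable (fun p : ℝ × ℝ => gaussianPDF 0 v₁ p.1 * gaussianPDF p.1 v₂ p.2) :=
    ((measurable_gaussianPDF 0 v₁).comp measurable_fst).mul (joint_meas v₂)
  rw [lintegral_congr fun x => (lintegral_const_mul _ (measurable_gaussianPDF x v₂)).symm]
  rw [lintegral_lintegral_swap (f := fun x z => gaussianPDF 0 v₁ x * gaussianPDF x v₂ z)
    hmf.aemeasurable]
  have hinner : ∀ z : ℝ, ∫⁻ x, gaussianPDF 0 v₁ x * gaussianPDF x v₂ z
      = gaussianPDF 0 (v₁ + v₂) z := by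
    intro z
    simp only [gaussianPDF]
    simp_rw [← ENNReal.ofReal_mul (gaussianPDFReal_nonneg 0 v₁ _)]
    rw [← ofReal_integral_eq_lintegral_ofReal (integrable_pdf_conv v₁ v₂ h₁ h₂ z)
      (ae_of_all _ fun x => mul_nonneg (gaussianPDFReal_nonneg _ _ _)
        (gaussianPDFReal_nonneg _ _ _)),
      pdf_conv v₁ v₂ h₁ h₂ z]
  simp only [hinner]
  rw [gaussianReal_apply _ h₁₂]

def nnsq (x : ℝ) : ℝ≥0 := ⟨x^2, sq_nonneg x⟩

lemma map_sum_gaussian : ∀ (n : ℕ) (a : Fin n → ℝ) (V : Fin n → ℝ≥0),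
    (Measure.pi fun t => gaussianReal 0 (V t)).map (fun r : Fin n → ℝ => ∑ t, a t * r t)
      = gaussianReal 0 (∑ t, nnsq (a t) * V t)
  | 0, a, V => by
    simp only [Finset.univ_eq_empty, Finset.sum_empty, gaussianReal_zero_var]
    rw [Measure.map_const]
    simp
  | (n+1), a, V => by
    have hmp := measurePreserving_piFinSuccAbove (fun t : Fin (n+1) => gaussianReal 0 (V t)) 0
    set e := MeasurableEquiv.piFinSuccAbove (fun _ : Fin (n+1) => ℝ) 0 with he
    have hg2 : Measurable fun r : Fin n → ℝ => ∑ j, a j.succ * r j :=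
      Finset.measurable_sum _ (fun t _ => (measurable_pi_apply t).const_mul _)
    have hg : Measurable fun p : ℝ × (Fin n → ℝ) =>
        a 0 * p.1 + ∑ j, a j.succ * p.2 j :=
      (measurable_fst.const_mul _).add (hg2.comp measurable_snd)
    have hX : (fun r : Fin (n+1) → ℝ => ∑ t, a t * r t)
        = (fun p : ℝ × (Fin n → ℝ) => a 0 * p.1 + ∑ j, a j.succ * p.2 j) ∘ e := by
      funext r
      simp [e, MeasurableEquiv.piFinSuccAbove, Fin.sum_univ_succ, Fin.succAbove_zero, Fin.tail]
    simp only [Fin.zero_succAbove] at hmp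
    rw [hX, ← Measure.map_map hg e.measurable, hmp.map_eq]
    have hsplit : (fun p : ℝ × (Fin n → ℝ) => a 0 * p.1 + ∑ j, a j.succ * p.2 j)
        = (fun q : ℝ × ℝ => q.1 + q.2) ∘
          (Prod.map (fun x : ℝ => a 0 * x) (fun r : Fin n → ℝ => ∑ j, a j.succ * r j)) := rfl
    rw [hsplit, ← Measure.map_map measurable_add ((measurable_const_mul _).prodMap hg2),
      ← Measure.map_prod_map _ _ (measurable_const_mul _) hg2,
      gaussianReal_map_const_mul, map_sum_gaussian n (fun j => a j.succ) (fun j => V j.succ),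
      mul_zero, gaussian_conv, Fin.sum_univ_succ (f := fun t => nnsq (a t) * V t)]
    rfl

lemma gaussian_tail (V : ℝ≥0) {s : ℝ} (hs : 0 < s) :
    gaussianReal 0 V {x : ℝ | |x| > s} ≤
      ENNReal.ofReal (2 * Real.sqrt V / (s * Real.sqrt (2 * π)) *
        Real.exp (-s^2 / (2 * V))) := by
  have hset : {x : ℝ | |x| > s} = Iio (-s) ∪ Ioi s := by
    ext x
    simp only [mem_setOf_eq, gt_iff_lt, lt_abs, mem_union, mem_Iio, mem_Ioi, lt_neg]
    tauto
  rw [hset]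
  by_cases hV : V = 0
  · subst hV
    rw [gaussianReal_zero_var,
      Measure.dirac_apply' _ (measurableSet_Iio.union measurableSet_Ioi)]
    have h0 : (0:ℝ) ∉ Iio (-s) ∪ Ioi s := by
      intro h
      rcases h with h | h
      · rw [mem_Iio] at h; linarith
      · rw [mem_Ioi] at h; linarith
    rw [Set.indicator_of_notMem h0]
    exact zero_le
  have hVr : (0:ℝ) < V := lt_of_le_of_ne V.coe_nonneg (fun h => hV (by exact_mod_cast h.symm))
  set Vr := (V:ℝ) with hVrdef
  set K : ℝ := (Real.sqrt (2 * π * Vr))⁻¹ with hK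
  set c : ℝ := -(Vr * K) with hc
  set F : ℝ → ℝ := fun x => c * Real.exp (-x^2/(2*Vr)) with hF
  have hderiv : ∀ x : ℝ, HasDerivAt F (x * gaussianPDFReal 0 V x) x := by
    intro x
    have h1 : HasDerivAt (fun x : ℝ => -x^2/(2*Vr)) (-(2*x^1)/(2*Vr)) x :=
      ((hasDerivAt_pow 2 x).neg).div_const _
    have h2 := (h1.exp).const_mul c
    refine h2.congr_deriv ?_
    rw [gaussianPDFReal_def]
    simp only [sub_zero, pow_one, hc, hK]
    field_simp
    rw [← hVrdef]; ring
  have htend : Filter.Tendsto F atTop (nhds 0) := by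
    have h1 : Filter.Tendsto (fun x : ℝ => -x^2/(2*Vr)) atTop atBot := by
      simp_rw [neg_div]
      exact Filter.tendsto_neg_atTop_atBot.comp
        ((tendsto_pow_atTop two_ne_zero).atTop_div_const (by positivity))
    have h2 := (Real.tendsto_exp_atBot.comp h1).const_mul c
    simpa using h2
  have hcont : ContinuousWithinAt F (Ici s) s :=
    (Continuous.continuousWithinAt (by fun_prop))
  have hnn : ∀ x ∈ Ioi s, 0 ≤ x * gaussianPDFReal 0 V x :=
    fun x hx => mul_nonneg (hs.trans hx).le (gaussianPDFReal_nonneg _ _ _)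
  have hInt : IntegrableOn (fun x => x * gaussianPDFReal 0 V x) (Ioi s) :=
    integrableOn_Ioi_deriv_of_nonneg hcont (fun x _ => hderiv x) hnn htend
  have hval : ∫ x in Ioi s, x * gaussianPDFReal 0 V x = Vr * K * Real.exp (-s^2/(2*Vr)) := by
    rw [integral_Ioi_of_hasDerivAt_of_nonneg hcont (fun x _ => hderiv x) hnn htend]
    simp only [hF, hc]
    ring
  have hmono : ∫ x in Ioi s, gaussianPDFReal 0 V x
      ≤ (1/s) * (Vr * K * Real.exp (-s^2/(2*Vr))) := by
    rw [← hval, ← MeasureTheory.integral_const_mul]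
    refine setIntegral_mono_on ((integrable_gaussianPDFReal 0 V).integrableOn)
      (hInt.const_mul _) measurableSet_Ioi (fun x hx => ?_)
    have hx1 : 1 ≤ x / s := (one_le_div hs).2 (le_of_lt hx)
    calc gaussianPDFReal 0 V x = 1 * gaussianPDFReal 0 V x := (one_mul _).symm
      _ ≤ (x/s) * gaussianPDFReal 0 V x :=
          mul_le_mul_of_nonneg_right hx1 (gaussianPDFReal_nonneg _ _ _)
      _ = 1/s * (x * gaussianPDFReal 0 V x) := by ring
  have heven : ∀ x : ℝ, gaussianPDFReal 0 V (-x) = gaussianPDFReal 0 V x := by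
    intro x
    rw [gaussianPDFReal_def]
    simp [neg_sq]
  have hsym : ∫ x in Iio (-s), gaussianPDFReal 0 V x = ∫ x in Ioi s, gaussianPDFReal 0 V x := by
    rw [← integral_Iic_eq_integral_Iio, ← neg_neg (-s), ← integral_comp_neg_Ioi (- -s)]
    simp only [neg_neg, heven]
  have hdisj : Disjoint (Iio (-s)) (Ioi s) := by
    rw [Set.disjoint_left]
    intro x hx1 hx2
    rw [mem_Iio] at hx1
    rw [mem_Ioi] at hx2
    linarith
  rw [gaussianReal_apply_eq_integral _ hV,
    setIntegral_union hdisj measurableSet_Ioi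
      ((integrable_gaussianPDFReal 0 V).integrableOn)
      ((integrable_gaussianPDFReal 0 V).integrableOn), hsym]
  apply ENNReal.ofReal_le_ofReal
  have hsc : Vr * K = Real.sqrt Vr / Real.sqrt (2*π) := by
    rw [hK, Real.sqrt_mul (by positivity : (0:ℝ) ≤ 2*π)]
    rw [eq_div_iff (by positivity), mul_inv]
    have h2 : Real.sqrt Vr ≠ 0 := by positivity
    field_simp
    rw [Real.sq_sqrt hVr.le]
  calc (∫ x in Ioi s, gaussianPDFReal 0 V x) + ∫ x in Ioi s, gaussianPDFReal 0 V x
      ≤ (1/s) * (Vr * K * Real.exp (-s^2/(2*Vr))) + (1/s) * (Vr * K * Real.exp (-s^2/(2*Vr))) :=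
        add_le_add hmono hmono
    _ = 2 * Real.sqrt Vr / (s * Real.sqrt (2 * π)) * Real.exp (-s ^ 2 / (2 * Vr)) := by
        rw [hsc]; field_simp; ring

/-- Privacy-loss tail bound: for independent `r_t ~ N(0, m_t²)` and fixed `v_t`,
with `σ² = Σ_t (v_t/m_t)²` and `s = ε − (1/2)Σ_t (v_t/m_t)² > 0`,
`P(|Σ_t (2r_t v_t + v_t²)/(2m_t²)| > ε) ≤ (2σ/(s√(2π)))·exp(−s²/(2σ²))`. -/
theorem privacy_loss_tail_bound (T : ℕ) (m v : Fin T → ℝ) (hm : ∀ t, 0 < m t)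
    (ε σ s : ℝ)
    (hσ : σ = Real.sqrt (∑ t, (v t / m t) ^ 2))
    (hs : s = ε - (1 / 2) * ∑ t, (v t / m t) ^ 2) (hspos : 0 < s) :
    (Measure.pi fun t : Fin T => gaussianReal 0 ⟨(m t) ^ 2, sq_nonneg (m t)⟩)
        {r : Fin T → ℝ | |∑ t, (2 * r t * v t + (v t) ^ 2) / (2 * (m t) ^ 2)| > ε} ≤
      ENNReal.ofReal (2 * σ / (s * Real.sqrt (2 * Real.pi)) *
        Real.exp (-s ^ 2 / (2 * σ ^ 2))) := by

  set μ := Measure.pi fun t : Fin T => gaussianReal 0 ⟨(m t) ^ 2, sq_nonneg (m t)⟩ with hμ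
  set a : Fin T → ℝ := fun t => v t / (m t) ^ 2 with ha
  set X : (Fin T → ℝ) → ℝ := fun r => ∑ t, a t * r t with hXdef
  have hXm : Measurable X :=
    Finset.measurable_sum _ fun t _ => (measurable_pi_apply t).const_mul _
  have hc0 : 0 ≤ ∑ t, (v t / m t) ^ 2 := Finset.sum_nonneg fun t _ => sq_nonneg _
  have hdecomp : ∀ r : Fin T → ℝ, ∑ t, (2 * r t * v t + (v t) ^ 2) / (2 * (m t) ^ 2)
      = X r + (1/2) * ∑ t, (v t / m t) ^ 2 := by
    intro r
    rw [hXdef, Finset.mul_sum, ← Finset.sum_add_distrib]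
    refine Finset.sum_congr rfl fun t _ => ?_
    have hmt := (hm t).ne'
    rw [ha]
    field_simp
  have hsub : {r : Fin T → ℝ | |∑ t, (2 * r t * v t + (v t) ^ 2) / (2 * (m t) ^ 2)| > ε}
      ⊆ {r : Fin T → ℝ | |X r| > s} := by
    intro r hr
    simp only [mem_setOf_eq, gt_iff_lt] at hr ⊢
    rw [hdecomp r] at hr
    have habs := abs_add_le (X r) ((1/2) * ∑ t, (v t / m t) ^ 2)
    have habs2 : |(1/2) * ∑ t, (v t / m t) ^ 2| = (1/2) * ∑ t, (v t / m t) ^ 2 :=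
      abs_of_nonneg (by positivity)
    rw [habs2] at habs
    rw [hs]
    linarith
  refine le_trans (measure_mono hsub) ?_
  have hsetm : MeasurableSet {x : ℝ | |x| > s} :=
    measurableSet_lt measurable_const continuous_abs.measurable
  have hrw : μ {r : Fin T → ℝ | |X r| > s} = (μ.map X) {x : ℝ | |x| > s} := by
    rw [Measure.map_apply hXm hsetm]
    rfl
  rw [hrw, hμ, map_sum_gaussian T a (fun t => ⟨(m t) ^ 2, sq_nonneg (m t)⟩)]
  set M : Fin T → ℝ≥0 := fun t => ⟨(m t) ^ 2, sq_nonneg (m t)⟩ with hM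
  set W : ℝ≥0 := ∑ t, nnsq (a t) * M t with hW
  have hWr : (W : ℝ) = ∑ t, (v t / m t) ^ 2 := by
    rw [hW, NNReal.coe_sum]
    refine Finset.sum_congr rfl fun t _ => ?_
    have hmt := (hm t).ne'
    rw [NNReal.coe_mul]
    show (a t) ^ 2 * (m t) ^ 2 = (v t / m t) ^ 2
    rw [ha]
    field_simp
  refine le_trans (gaussian_tail W hspos) ?_
  apply le_of_eq
  congr 1
  rw [hWr, ← hσ, hσ, Real.sq_sqrt hc0]
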